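/- Let G=(N,Σ,P,S) be an ordered context-free grammar with no ε-rules, and let w be a string for which a ≺_G-least parse tree exists. Then the length of the (leftmost) derivation producing the least parse tree of w is at most (2|w|−1)·|N|. -/

import Mathlib

namespace Ocfg

/-- A symbol: nonterminal or terminal. -/
inductive Sym (N T : Type) : Type
  | nt : N → Sym N T
  | tm : T → Sym N T

/-- An (ordered) context-free grammar: each nonterminal has an ordered
list of right-hand sides; `start` is the start nonterminal. -/
structure OCFG (N T : Type) : Type where
  prods : N → List (List (Sym N T))
  start : N

/-- Ordered ranked trees used as parse trees: terminal leaves, ε-leaves,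
and internal nodes labelled by a nonterminal together with the index of
the rule applied there. -/
inductive PTree (N T : Type) : Type
  | leaf : T → PTree N T
  | eps  : PTree N T
  | node : N → ℕ → List (PTree N T) → PTree N T

mutual
/-- `ParseFrom G A w t`: `t` is a parse tree with root nonterminal `A`
and yield `w`. -/
inductive ParseFrom {N T : Type} (G : OCFG N T) : N → List T → PTree N T → Prop
  | epsNode (A : N) (i : ℕ) :
      (G.prods A)[i]? = some [] →
      ParseFrom G A [] (PTree.node A i [PTree.eps])
  | node (A : N) (i : ℕ) (r : List (Sym N T)) (w : List T) (cs : List (PTree N T)) :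
      (G.prods A)[i]? = some r → r ≠ [] → ParseSeq G r w cs →
      ParseFrom G A w (PTree.node A i cs)

/-- `ParseSeq G r w cs`: the trees `cs` match, in order, the symbols of `r`,
with concatenated yield `w`. -/
inductive ParseSeq {N T : Type} (G : OCFG N T) : List (Sym N T) → List T → List (PTree N T) → Prop
  | nil : ParseSeq G [] [] []
  | consTm (a : T) (r : List (Sym N T)) (w : List T) (cs : List (PTree N T)) :
      ParseSeq G r w cs →
      ParseSeq G (Sym.tm a :: r) (a :: w) (PTree.leaf a :: cs)
  | consNt (A : N) (t : PTree N T) (wA : List T) (r : List (Sym N T)) (w : List T)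
      (cs : List (PTree N T)) :
      ParseFrom G A wA t → ParseSeq G r w cs →
      ParseSeq G (Sym.nt A :: r) (wA ++ w) (t :: cs)
end

/-- The set `P_G(w)` of parse trees of `w`. -/
def parseTrees {N T : Type} (G : OCFG N T) (w : List T) : Set (PTree N T) :=
  {t | ParseFrom G G.start w t}

/-- `n(t)`: the sequence of rule indices of `t`, in pre-order. -/
def PTree.idxSeq {N T : Type} : PTree N T → List ℕ
  | .leaf _ => []
  | .eps => []
  | .node _ i cs => i :: (cs.attach.map (fun c => PTree.idxSeq c.1)).flatten
decreasing_by
  have := List.sizeOf_lt_of_mem c.2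
  simp_wf
  omega

/-- The order `≺_G` on parse trees: lexicographic comparison of the
pre-order rule-index sequences. -/
def treeLT {N T : Type} (t₁ t₂ : PTree N T) : Prop :=
  List.Lex (· < ·) t₁.idxSeq t₂.idxSeq

/-- One-step derivation relation `⇒` of the underlying CFG. -/
def OCFG.Step {N T : Type} (G : OCFG N T) (u v : List (Sym N T)) : Prop :=
  ∃ (u₁ u₂ : List (Sym N T)) (A : N) (r : List (Sym N T)),
    r ∈ G.prods A ∧ u = u₁ ++ Sym.nt A :: u₂ ∧ v = u₁ ++ r ++ u₂

/-- `⇒*`. -/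
def OCFG.Derives {N T : Type} (G : OCFG N T) : List (Sym N T) → List (Sym N T) → Prop :=
  Relation.ReflTransGen G.Step

/-- A nonterminal is useful if it occurs in some sentential form derivable from
the start symbol and derives some terminal string. -/
def Useful {N T : Type} (G : OCFG N T) (A : N) : Prop :=
  (∃ u₁ u₂ : List (Sym N T), G.Derives [Sym.nt G.start] (u₁ ++ Sym.nt A :: u₂)) ∧
  (∃ w : List T, G.Derives [Sym.nt A] (w.map Sym.tm))

/-- `G` is cyclic if `A ⇒⁺ A` for some nonterminal `A`. -/
def Cyclic {N T : Type} (G : OCFG N T) : Prop :=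
  ∃ A : N, Relation.TransGen G.Step [Sym.nt A] [Sym.nt A]

/-- `G` has no ε-rules. -/
def NoEpsRules {N T : Type} (G : OCFG N T) : Prop :=
  ∀ (A : N) (r : List (Sym N T)), r ∈ G.prods A → r ≠ []

/-- A unit-rule step: `A → B` is a rule of `G`. -/
def UnitStep {N T : Type} (G : OCFG N T) (A B : N) : Prop :=
  [Sym.nt B] ∈ G.prods A

/-- `G` has a cycle of unit rules. -/
def HasUnitCycle {N T : Type} (G : OCFG N T) : Prop :=
  ∃ A : N, Relation.TransGen (UnitStep G) A A

/-- `G` is well-ordered: for every string `w`, every nonempty subset of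
`P_G(w)` has a `≺_G`-least element. -/
def WellOrderedG {N T : Type} (G : OCFG N T) : Prop :=
  ∀ (w : List T) (Φ : Set (PTree N T)), Φ ⊆ parseTrees G w → Φ.Nonempty →
    ∃ t ∈ Φ, ∀ t' ∈ Φ, t = t' ∨ treeLT t t'

/-- `t` is the `≺_G`-least parse tree of `w`. -/
def IsLeastTree {N T : Type} (G : OCFG N T) (w : List T) (t : PTree N T) : Prop :=
  ParseFrom G G.start w t ∧ ∀ t', ParseFrom G G.start w t' → t = t' ∨ treeLT t t'

/-- `G` has least parse trees. -/
def HasLeastTrees {N T : Type} (G : OCFG N T) : Prop :=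
  ∀ w : List T, (parseTrees G w).Nonempty → ∃ t, IsLeastTree G w t

/-- Derivations of a given length (number of steps). -/
inductive DerivesIn {N T : Type} (G : OCFG N T) : List (Sym N T) → List (Sym N T) → ℕ → Prop
  | refl (u : List (Sym N T)) : DerivesIn G u u 0
  | step (u v w : List (Sym N T)) (n : ℕ) :
      G.Step u v → DerivesIn G v w n → DerivesIn G u w (n + 1)

/-- Number of rule applications in a parse tree (= length of the
corresponding leftmost derivation). -/
def PTree.numRules {N T : Type} : PTree N T → ℕ
  | .leaf _ => 0
  | .eps => 0
  | .node _ _ cs => 1 + ((cs.attach.map (fun c => PTree.numRules c.1)).foldr (· + ·) 0)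
decreasing_by
  have := List.sizeOf_lt_of_mem c.2
  simp_wf
  omega

/-- Height of a tree: a single leaf has height 0. -/
def PTree.height {N T : Type} : PTree N T → ℕ
  | .leaf _ => 0
  | .eps => 0
  | .node _ _ cs => 1 + ((cs.attach.map (fun c => PTree.height c.1)).foldr max 0)
decreasing_by
  have := List.sizeOf_lt_of_mem c.2
  simp_wf
  omega

/-- The language of `G`. -/
def langOf {N T : Type} (G : OCFG N T) : Language T :=
  {w | ∃ t, ParseFrom G G.start w t}

end Ocfg

open Ocfg

namespace Ocfg
variable {N T : Type}

@[simp] lemma idxSeq_node (A : N) (i : ℕ) (cs : List (PTree N T)) :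
    (PTree.node A i cs).idxSeq = i :: (cs.map PTree.idxSeq).flatten := by
  rw [PTree.idxSeq]
  simp [List.attach_map_val]

@[simp] lemma numRules_node (A : N) (i : ℕ) (cs : List (PTree N T)) :
    (PTree.node A i cs).numRules = 1 + (cs.map PTree.numRules).sum := by
  rw [PTree.numRules]
  simp [List.attach_map_val, List.sum]

end Ocfg
lemma lex_append_cancel {x y : List ℕ} : ∀ p : List ℕ,
    List.Lex (· < ·) (p ++ x) (p ++ y) → List.Lex (· < ·) x y
  | [], h => h
  | a :: p, h => by
    cases h with
    | cons h => exact lex_append_cancel p h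
    | rel h => omega

lemma lex_asymm : ∀ {x y : List ℕ},
    List.Lex (· < ·) x y → List.Lex (· < ·) y x → False
  | _, _, List.Lex.nil, h2 => by cases h2
  | _, _, List.Lex.cons h1, h2 => by
    cases h2 with
    | cons h2 => exact lex_asymm h1 h2
    | rel h2 => omega
  | _, _, List.Lex.rel h1, h2 => by
    cases h2 with
    | cons h2 => omega
    | rel h2 => omega
namespace Ocfg
variable {N T : Type}

lemma numRules_pos {G : OCFG N T} {A v s} (h : ParseFrom G A v s) :
    1 ≤ s.numRules := by
  cases h <;> simp

lemma yield_ne_nil {G : OCFG N T} (hne : NoEpsRules G) :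
    ∀ n (s : PTree N T), sizeOf s ≤ n → ∀ A v, ParseFrom G A v s → 1 ≤ v.length := by
  intro n
  induction n with
  | zero =>
    intro s hs A v h
    cases h <;> simp_all <;> omega
  | succ n ih =>
    intro s hs A v h
    cases h with
    | epsNode A i hr =>
      exact absurd rfl (hne A [] (List.mem_of_getElem? hr))
    | node A i r v cs hr hrne hseq =>
      cases hseq with
      | nil => exact absurd rfl hrne
      | consTm a r' w' cs' h' => simp
      | consNt B t0 wA r' w' cs' hpf hsq =>
        have h1 : 1 ≤ wA.length := by
          refine ih t0 ?_ B wA hpf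
          have : sizeOf t0 < sizeOf (PTree.node A i (t0 :: cs')) := by
            simp; omega
          omega
        simp; omega

/-- One-hole contexts, functionally. -/
def Ctx (G : OCFG N T) (A : N) (u : List T) (B : N) (v : List T)
    (C : PTree N T → PTree N T) (pre post : List ℕ) : Prop :=
  ∀ s, ParseFrom G B v s →
    ParseFrom G A u (C s) ∧ (C s).idxSeq = pre ++ s.idxSeq ++ post

lemma ctx_id (G : OCFG N T) (A : N) (u : List T) : Ctx G A u A u id [] [] := by
  intro s hs; exact ⟨hs, by simp⟩

lemma ctx_comp {G : OCFG N T} {A u B v C1 p1 q1 Z z C2 p2 q2}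
    (h1 : Ctx G A u B v C1 p1 q1) (h2 : Ctx G B v Z z C2 p2 q2) :
    Ctx G A u Z z (fun x => C1 (C2 x)) (p1 ++ p2) (q2 ++ q1) := by
  intro s hs
  obtain ⟨hp2, he2⟩ := h2 s hs
  obtain ⟨hp1, he1⟩ := h1 _ hp2
  exact ⟨hp1, by rw [he1, he2]; simp⟩

/-- chain step context -/
lemma ctx_chain {G : OCFG N T} {A : N} {i : ℕ} {B : N} {v : List T}
    (hr : (G.prods A)[i]? = some [Sym.nt B]) :
    Ctx G A v B v (fun x => PTree.node A i [x]) [i] [] := by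
  intro s hs
  constructor
  · refine ParseFrom.node A i [Sym.nt B] v [s] hr (by simp) ?_
    have := ParseSeq.consNt (G := G) B s v [] [] [] hs ParseSeq.nil
    simpa using this
  · simp

end Ocfg
namespace Ocfg
variable {N T : Type}

@[simp] lemma idxSeq_leaf (a : T) : (PTree.leaf a : PTree N T).idxSeq = [] := by
  rw [PTree.idxSeq]

@[simp] lemma numRules_leaf (a : T) : (PTree.leaf a : PTree N T).numRules = 0 := by
  rw [PTree.numRules]

lemma no_repeat {G : OCFG N T} {w : List T} {t : PTree N T}
    (hleast : IsLeastTree G w t) {A : N} {v : List T} {s : PTree N T}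
    {C' : PTree N T → PTree N T} {pre' post : List ℕ}
    {D : PTree N T → PTree N T} {seg : List ℕ}
    (hs : ParseFrom G A v s) (hC' : Ctx G G.start w A v C' pre' post)
    (hD : Ctx G A v A v D seg []) (hseg : seg ≠ []) (ht : t = C' (D s)) : False := by
  obtain ⟨hDs, heDs⟩ := hD s hs
  obtain ⟨hDDs, heDDs⟩ := hD _ hDs
  obtain ⟨h1p, h1e⟩ := hC' s hs
  obtain ⟨h0p, h0e⟩ := hC' _ hDs
  obtain ⟨h2p, h2e⟩ := hC' _ hDDs
  have hlseg : 1 ≤ seg.length := List.length_pos_iff.mpr hseg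
  have e0 : t.idxSeq = pre' ++ (seg ++ (s.idxSeq ++ post)) := by
    rw [ht, h0e, heDs]; simp
  have e1 : (C' s).idxSeq = pre' ++ (s.idxSeq ++ post) := by rw [h1e]; simp
  have e2 : (C' (D (D s))).idxSeq = pre' ++ (seg ++ (seg ++ (s.idxSeq ++ post))) := by
    rw [h2e, heDDs, heDs]; simp
  have L1 : List.Lex (· < ·) (seg ++ (s.idxSeq ++ post)) (s.idxSeq ++ post) := by
    rcases hleast.2 _ h1p with heq | hlt
    · exfalso
      have := congrArg (fun x => x.idxSeq.length) heq
      simp only [e0, e1, List.length_append] at this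
      omega
    · have := hlt
      unfold treeLT at this
      rw [e0, e1] at this
      exact lex_append_cancel pre' this
  have L2 : List.Lex (· < ·) (s.idxSeq ++ post) (seg ++ (s.idxSeq ++ post)) := by
    rcases hleast.2 _ h2p with heq | hlt
    · exfalso
      have := congrArg (fun x => x.idxSeq.length) heq
      simp only [e0, e2, List.length_append] at this
      omega
    · have := hlt
      unfold treeLT at this
      rw [e0, e2] at this
      exact lex_append_cancel seg (lex_append_cancel pre' this)
  exact lex_asymm L1 L2

/-- Invariant along a unit chain. -/
def Inv (G : OCFG N T) (w : List T) (seen : Finset N) (A : N) (v : List T)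
    (C : PTree N T → PTree N T) (pre post : List ℕ) : Prop :=
  ∀ B ∈ seen, ∃ (C' : PTree N T → PTree N T) (pre' : List ℕ)
    (D : PTree N T → PTree N T) (seg : List ℕ),
    Ctx G G.start w B v C' pre' post ∧ Ctx G B v A v D seg [] ∧ seg ≠ [] ∧
    pre = pre' ++ seg ∧ ∀ x, C x = C' (D x)

end Ocfg
namespace Ocfg
variable {N T : Type}

lemma main_bound [Fintype N] {G : OCFG N T} {w : List T} {t : PTree N T}
    (hne : NoEpsRules G) (hleast : IsLeastTree G w t) :
    ∀ n : ℕ,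
    (∀ (s : PTree N T), s.numRules ≤ n → ∀ (A : N) (v : List T), ParseFrom G A v s →
      ∀ (seen : Finset N) (C : PTree N T → PTree N T) (pre post : List ℕ),
        Ctx G G.start w A v C pre post → Inv G w seen A v C pre post → t = C s →
        s.numRules ≤ 2 * (v.length - 1) * Fintype.card N + (Fintype.card N - seen.card))
    ∧
    (∀ (r : List (Sym N T)) (v : List T) (cs : List (PTree N T)), ParseSeq G r v cs →
      (cs.map PTree.numRules).sum ≤ n →
      ∀ (K : List (PTree N T) → PTree N T) (kpre kpost : List ℕ),
        (∀ cs', ParseSeq G r v cs' → ParseFrom G G.start w (K cs') ∧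
          (K cs').idxSeq = kpre ++ (cs'.map PTree.idxSeq).flatten ++ kpost) →
        t = K cs →
        (cs.map PTree.numRules).sum + r.length * Fintype.card N
          ≤ 2 * v.length * Fintype.card N) := by
  classical
  intro n
  induction n using Nat.strong_induction_on with
  | _ n IH =>
  set c := Fintype.card N with hc
  have hPn : ∀ (s : PTree N T), s.numRules ≤ n → ∀ (A : N) (v : List T), ParseFrom G A v s →
      ∀ (seen : Finset N) (C : PTree N T → PTree N T) (pre post : List ℕ),
        Ctx G G.start w A v C pre post → Inv G w seen A v C pre post → t = C s →
        s.numRules ≤ 2 * (v.length - 1) * c + (c - seen.card) := by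
    intro s hsn A v hs seen C pre post hC hInv ht
    have hs' := hs
    cases hs with
    | epsNode A i hr =>
      exact absurd rfl (hne A [] (List.mem_of_getElem? hr))
    | node A i r v cs hr hrne hseq =>
      by_cases hA : A ∈ seen
      · exfalso
        obtain ⟨C', pre', D, seg, hC', hD, hseg, hpre, hCe⟩ := hInv A hA
        exact no_repeat hleast hs' hC' hD hseg (ht.trans (hCe _))
      · have hcard : seen.card < c := by
          have h1 : (insert A seen).card ≤ c := Finset.card_le_univ _
          rw [Finset.card_insert_of_notMem hA] at h1; omega
        have hv1 : 1 ≤ v.length := yield_ne_nil hne _ _ le_rfl A v hs'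
        match r, hrne, hr, hseq with
        | [], hrne, _, _ => exact absurd rfl hrne
        | [Sym.tm a], _, hr, hseq =>
          -- terminal singleton rule
          cases hseq with
          | consTm a r' w' cs' h' =>
            cases h'
            simp only [numRules_node, List.map_cons, List.map_nil, numRules_leaf,
              List.sum_cons, List.sum_nil, List.length_cons, List.length_nil]
            omega
        | [Sym.nt B], _, hr, hseq =>
          -- unit chain case
          cases hseq with
          | consNt B t0 wA r' w' cs' hpf h' =>
            cases h'
            simp only [List.append_nil] at hs' hC hInv ht hr hv1 hsn ⊢
            have hstep : Ctx G A wA B wA (fun x => PTree.node A i [x]) [i] [] :=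
              ctx_chain hr
            have hC2 : Ctx G G.start w B wA (fun x => C (PTree.node A i [x]))
                (pre ++ [i]) post := by
              have := ctx_comp hC hstep
              simpa using this
            have hInv2 : Inv G w (insert A seen) B wA
                (fun x => C (PTree.node A i [x])) (pre ++ [i]) post := by
              intro B' hB'
              rcases Finset.mem_insert.mp hB' with hB' | hB'
              · subst hB'
                exact ⟨C, pre, fun x => PTree.node B' i [x], [i], hC, hstep,
                  by simp, rfl, fun x => rfl⟩
              · obtain ⟨C', pre', D, seg, h1, h2, h3, h4, h5⟩ := hInv B' hB'
                refine ⟨C', pre', fun x => D (PTree.node A i [x]), seg ++ [i],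
                  h1, ?_, by simp, by rw [h4]; simp, fun x => h5 _⟩
                have := ctx_comp h2 hstep
                simpa using this
            have hlt : t0.numRules < n := by
              rw [numRules_node] at hsn; simp at hsn; omega
            have hrec := (IH t0.numRules hlt).1 t0 le_rfl B wA hpf (insert A seen)
              (fun x => C (PTree.node A i [x])) (pre ++ [i]) post hC2 hInv2 ht
            have hcardi : (insert A seen).card = seen.card + 1 :=
              Finset.card_insert_of_notMem hA
            rw [hcardi] at hrec
            have hnr : (PTree.node A i [t0]).numRules = 1 + t0.numRules := by simp
            rw [hnr]
            generalize 2 * (wA.length - 1) * c = P at hrec ⊢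
            omega
        | sym1 :: sym2 :: r'', _, hr, hseq =>
          -- branching case
          have hsum : ((cs.map PTree.numRules).sum) < n := by
            have h := hsn
            rw [numRules_node] at h; omega
          have hQ := (IH _ hsum).2 _ v cs hseq le_rfl
            (fun cs' => C (PTree.node A i cs')) (pre ++ [i]) post ?hK ht
          case hK =>
            intro cs' hcs'
            have hpf' : ParseFrom G A v (PTree.node A i cs') :=
              ParseFrom.node A i _ v cs' hr (by simp) hcs'
            obtain ⟨h1, h2⟩ := hC _ hpf'
            refine ⟨h1, ?_⟩
            rw [h2]; simp
          -- arithmetic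
          obtain ⟨lv', hlv⟩ : ∃ m, v.length = m + 1 := ⟨v.length - 1, by omega⟩
          rw [hlv] at hQ ⊢
          have h2c : 2 * c ≤ (sym1 :: sym2 :: r'').length * c :=
            Nat.mul_le_mul_right c (by simp)
          have hexp : 2 * (lv' + 1) * c = 2 * lv' * c + 2 * c := by ring
          rw [hexp] at hQ
          rw [numRules_node]
          simp only [Nat.add_sub_cancel]
          generalize 2 * lv' * c = P at hQ ⊢
          generalize (cs.map PTree.numRules).sum = S at hQ ⊢
          generalize ((sym1 : Sym N T) :: sym2 :: r'').length * c = R at hQ h2c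
          omega
  refine ⟨hPn, ?_⟩
  suffices H : ∀ (cs : List (PTree N T)) (r : List (Sym N T)) (v : List T),
      ParseSeq G r v cs → (cs.map PTree.numRules).sum ≤ n →
      ∀ (K : List (PTree N T) → PTree N T) (kpre kpost : List ℕ),
        (∀ cs', ParseSeq G r v cs' → ParseFrom G G.start w (K cs') ∧
          (K cs').idxSeq = kpre ++ (cs'.map PTree.idxSeq).flatten ++ kpost) →
        t = K cs →
        (cs.map PTree.numRules).sum + r.length * c ≤ 2 * v.length * c by
    exact fun r v cs hseq hsum K kpre kpost hK htK => H cs r v hseq hsum K kpre kpost hK htK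
  intro cs
  induction cs with
  | nil =>
    intro r v hseq hsum K kpre kpost hK htK
    cases hseq
    simp
  | cons c0 cs'' ih =>
    intro r v hseq hsum K kpre kpost hK htK
    cases hseq with
    | consTm a r' w' cs2 hps =>
      have hrec := ih r' w' hps (by simp at hsum ⊢; omega)
        (fun l => K (PTree.leaf a :: l)) kpre kpost ?hKtm htK
      case hKtm =>
        intro l hl
        obtain ⟨p, e⟩ := hK _ (ParseSeq.consTm a r' w' l hl)
        exact ⟨p, by rw [e]; simp⟩
      simp only [List.map_cons, numRules_leaf, List.sum_cons, List.length_cons]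
      have hexp : (r'.length + 1) * c = r'.length * c + c := by ring
      have hexp2 : 2 * (w'.length + 1) * c = 2 * w'.length * c + 2 * c := by ring
      rw [hexp, hexp2]
      generalize r'.length * c = P1 at hrec ⊢
      generalize 2 * w'.length * c = P2 at hrec ⊢
      omega
    | consNt B c0 wA r' w' cs2 hpf hps =>
      have hla : 1 ≤ wA.length := yield_ne_nil hne _ _ le_rfl B wA hpf
      have hchild := hPn c0 (by simp at hsum; omega) B wA hpf ∅
        (fun x => K (x :: cs'')) kpre ((cs''.map PTree.idxSeq).flatten ++ kpost)
        ?hC0 (by intro B' hB'; simp at hB') htK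
      case hC0 =>
        intro x hx
        obtain ⟨p, e⟩ := hK _ (ParseSeq.consNt B x wA r' w' cs'' hx hps)
        exact ⟨p, by rw [e]; simp⟩
      have hrec := ih r' w' hps (by simp at hsum; omega)
        (fun l => K (c0 :: l)) (kpre ++ c0.idxSeq) kpost ?hK2 htK
      case hK2 =>
        intro l hl
        obtain ⟨p, e⟩ := hK _ (ParseSeq.consNt B c0 wA r' w' l hpf hl)
        exact ⟨p, by rw [e]; simp⟩
      simp only [Finset.card_empty, Nat.sub_zero] at hchild
      obtain ⟨la', hla'⟩ : ∃ m, wA.length = m + 1 := ⟨wA.length - 1, by omega⟩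
      rw [hla'] at hchild
      simp only [Nat.add_sub_cancel] at hchild
      simp only [List.map_cons, List.sum_cons, List.length_cons, List.length_append, hla']
      have hexp : 2 * (la' + 1 + w'.length) * c = 2 * la' * c + 2 * c + 2 * w'.length * c :=
        by ring
      have hexp2 : (r'.length + 1) * c = r'.length * c + c := by ring
      rw [hexp, hexp2]
      generalize 2 * la' * c = P1 at hchild ⊢
      generalize 2 * w'.length * c = P2 at hrec ⊢
      generalize r'.length * c = P3 at hrec ⊢
      omega

end Ocfg

/-- In an oCFG with no ε-rules, the leftmost derivation of the
`≺_G`-least parse tree of `w` (i.e. its number of rule applications) has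
length at most `(2|w| − 1)·|N|`. -/
theorem stmt9 {N T : Type} [Fintype N] [Fintype T] (G : OCFG N T)
    (hne : NoEpsRules G) (w : List T) (t : PTree N T)
    (hleast : IsLeastTree G w t) :
    t.numRules ≤ (2 * w.length - 1) * Fintype.card N := by
  have hpf := hleast.1
  have hw : 1 ≤ w.length := Ocfg.yield_ne_nil hne _ _ le_rfl _ _ hpf
  have hmain := (Ocfg.main_bound hne hleast t.numRules).1 t le_rfl G.start w hpf ∅
    id [] [] (Ocfg.ctx_id G G.start w) (by intro B hB; simp at hB) rfl
  simp only [Finset.card_empty, Nat.sub_zero] at hmain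
  obtain ⟨lw', hlw⟩ : ∃ m, w.length = m + 1 := ⟨w.length - 1, by omega⟩
  rw [hlw] at hmain ⊢
  have h1 : 2 * (lw' + 1) - 1 = 2 * lw' + 1 := by omega
  have h2 : (2 * lw' + 1) * Fintype.card N = 2 * lw' * Fintype.card N + Fintype.card N := by
    ring
  rw [h1, h2]
  simpa using hmain
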